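/- Let T be a bounded positive definite invertible operator on a Hilbert space with bounded inverse T⁻¹, and let P be an orthogonal projection. Then P (P T P)⁻¹ P ≤ P T⁻¹ P, where (P T P)⁻¹ denotes the inverse of the restriction of P T P to the range of P. -/

import Mathlib

theorem stmt_5 {H : Type*} [NormedAddCommGroup H] [InnerProductSpace ℂ H] [CompleteSpace H]
    (T Tinv P S : H →L[ℂ] H)
    (hT : IsSelfAdjoint T)
    (hpos : ∃ c : ℝ, 0 < c ∧ ∀ x : H, c * ‖x‖ ^ 2 ≤ (inner ℂ x (T x) : ℂ).re)
    (hTinv1 : T ∘L Tinv = 1) (hTinv2 : Tinv ∘L T = 1)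
    (hP : P ∘L P = P) (hPsa : IsSelfAdjoint P)
    (hS1 : P ∘L S ∘L P = S)
    (hS2 : (P ∘L T ∘L P) ∘L S = P) (hS3 : S ∘L (P ∘L T ∘L P) = P) :
    ∀ x : H, (inner ℂ x (S x) : ℂ).re ≤ (inner ℂ x ((P ∘L Tinv ∘L P) x) : ℂ).re := by
  intro x
  obtain ⟨c, hc, hpos⟩ := hpos
  have hsym : ∀ (A : H →L[ℂ] H), IsSelfAdjoint A → ∀ a b : H,
      (inner ℂ (A a) b : ℂ) = inner ℂ a (A b) := by
    intro A hA a b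
    rw [← ContinuousLinearMap.adjoint_inner_left, hA.adjoint_eq]
  -- P ∘L S = S and S x in range of P
  have hPS : P ∘L S = S := by
    conv_lhs => rw [← hS1]
    rw [← ContinuousLinearMap.comp_assoc, hP, hS1]
  have hPSx : P (S x) = S x := by
    have := congrArg (fun A : H →L[ℂ] H => A x) hPS
    simpa using this
  -- (P T P) S x = P x
  have hkey : P (T (P (S x))) = P x := by
    have := congrArg (fun A : H →L[ℂ] H => A x) hS2
    simpa using this
  have hTTinv : ∀ y : H, T (Tinv y) = y := by
    intro y
    have := congrArg (fun A : H →L[ℂ] H => A y) hTinv1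
    simpa using this
  set u := S x with hu
  set v := Tinv (P x) with hv
  have hA : (inner ℂ u (T u) : ℂ) = inner ℂ u x := by
    calc (inner ℂ u (T u) : ℂ) = inner ℂ (P u) (T (P u)) := by rw [hPSx]
    _ = inner ℂ u (P (T (P u))) := by rw [hsym P hPsa]
    _ = inner ℂ u (P x) := by rw [hkey]
    _ = inner ℂ (P u) x := by rw [← hsym P hPsa]
    _ = inner ℂ u x := by rw [hPSx]
  have hB : (inner ℂ u (T v) : ℂ) = inner ℂ u x := by
    rw [hv, hTTinv]
    calc (inner ℂ u (P x) : ℂ) = inner ℂ (P u) x := by rw [← hsym P hPsa]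
    _ = inner ℂ u x := by rw [hPSx]
  have hC : (inner ℂ v (T u) : ℂ) = inner ℂ x u := by
    calc (inner ℂ v (T u) : ℂ) = inner ℂ (T v) u := by rw [hsym T hT]
    _ = inner ℂ (P x) u := by rw [hv, hTTinv]
    _ = inner ℂ x (P u) := by rw [hsym P hPsa]
    _ = inner ℂ x u := by rw [hPSx]
  have hD : (inner ℂ v (T v) : ℂ) = inner ℂ ((P ∘L Tinv ∘L P) x) x := by
    rw [hv, hTTinv]
    calc (inner ℂ (Tinv (P x)) (P x) : ℂ) = inner ℂ (P (Tinv (P x))) x := by rw [← hsym P hPsa]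
    _ = inner ℂ ((P ∘L Tinv ∘L P) x) x := by simp
  have h0 : 0 ≤ (inner ℂ (u - v) (T (u - v)) : ℂ).re := by
    refine le_trans ?_ (hpos (u - v))
    positivity
  have hexp : (inner ℂ (u - v) (T (u - v)) : ℂ)
      = inner ℂ u (T u) - inner ℂ u (T v) - inner ℂ v (T u) + inner ℂ v (T v) := by
    rw [map_sub, inner_sub_left, inner_sub_right, inner_sub_right]
    ring
  rw [hexp, hA, hB, hC, hD] at h0
  simp only [Complex.add_re, Complex.sub_re] at h0
  have h1 : (inner ℂ x u : ℂ).re = (inner ℂ x (S x) : ℂ).re := rfl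
  have h2 : (inner ℂ ((P ∘L Tinv ∘L P) x) x : ℂ).re = (inner ℂ x ((P ∘L Tinv ∘L P) x) : ℂ).re :=
    by rw [← inner_conj_symm, Complex.conj_re]
  rw [h1, h2] at h0
  linarith
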